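/- Let F : ℕ → A be finitely supported (F(k) = 0 for all but finitely many k), representing the element Σ_k F(k)·x^k of the non-unital skew polynomial ring A[x; σ̃, 0], in which multiplication is determined by (f·x^k)·g = f·σ̃^k(g)·x^k. Then F(k)·σ̃^k(g) = g·F(k) for all g ∈ A and all k ∈ ℕ (i.e. Σ_k F(k)·x^k commutes with every element of A) if and only if for every k ∈ ℕ, F(k) vanishes on Sep^k(J), i.e. F(k)(x) = 0 for every x ∈ J with σ^k(x) ≠ x. -/

import Mathlib

theorem stmt11 (J : Type*) [Countable J] (σ : J ≃ J)
    (F : ℕ → J →₀ ℝ) (hF : (Function.support F).Finite) :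
    (∀ (g : J →₀ ℝ) (k : ℕ), F k * Finsupp.equivMapDomain (σ ^ k) g = g * F k) ↔
      (∀ (k : ℕ) (x : J), (σ ^ k) x ≠ x → F k x = 0) := by
  constructor
  · intro h k x hx
    have := congrArg (fun f => f x) (h (Finsupp.single x 1) k)
    simp only [Finsupp.mul_apply, Finsupp.equivMapDomain_apply, Finsupp.single_apply] at this
    have hne : (σ ^ k).symm x ≠ x := fun he => hx ((Equiv.symm_apply_eq _).mp he).symm
    rw [Finsupp.single_eq_of_ne' (Ne.symm hne), Finsupp.single_eq_same, mul_zero, one_mul] at this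
    exact this.symm
  · intro h g k
    ext x
    simp only [Finsupp.mul_apply, Finsupp.equivMapDomain_apply]
    by_cases hx : (σ ^ k) x = x
    · rw [(Equiv.symm_apply_eq _).mpr hx.symm, mul_comm]
    · rw [h k x hx, zero_mul, mul_zero]
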